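/- A sequent is valid if and only if some subsequent of it is derivable in Mp. -/

import Mathlib

/-- Propositional formulas in negation normal form. -/
inductive Fm : Type
  | pos : ℕ → Fm
  | neg : ℕ → Fm
  | conj : Fm → Fm → Fm
  | disj : Fm → Fm → Fm
  deriving DecidableEq

/-- Boolean evaluation of a formula under a valuation. -/
def Fm.eval (v : ℕ → Bool) : Fm → Bool
  | .pos p => v p
  | .neg p => !(v p)
  | .conj a b => a.eval v && b.eval v
  | .disj a b => a.eval v || b.eval v

/-- A sequent (nonempty multiset of formulas) is valid if under every
valuation some member is true (i.e. the disjunction is a tautology). -/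
def Valid (Γ : Multiset Fm) : Prop :=
  Γ ≠ 0 ∧ ∀ v : ℕ → Bool, ∃ A ∈ Γ, Fm.eval v A = true

/-- A sequent is minimal if it is valid and no proper sub-multiset is valid. -/
def MinimalSeq (Γ : Multiset Fm) : Prop :=
  Valid Γ ∧ ∀ Δ : Multiset Fm, Δ < Γ → ¬ Valid Δ

/-- Derivability in minimal sequent calculus Mp. -/
inductive Mp : Multiset Fm → Prop
  | ax (P : ℕ) : Mp {Fm.pos P, Fm.neg P}
  | blend {Γ Δ S : Multiset Fm} {A B : Fm} :
      Mp (Γ + Δ + {A}) → Mp (Γ + S + {B}) → Mp (Γ + Δ + S + {Fm.conj A B})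
  | par {Γ : Multiset Fm} {A B : Fm} :
      Mp (Γ + {A, B}) → Mp (Γ + {Fm.disj A B})
  | plus1 {Γ : Multiset Fm} {A B : Fm} :
      Mp (Γ + {A}) → Mp (Γ + {Fm.disj A B})
  | plus2 {Γ : Multiset Fm} {A B : Fm} :
      Mp (Γ + {B}) → Mp (Γ + {Fm.disj A B})

namespace Stmt9Aux

/-- Number of connectives in a formula. -/
def deg : Fm → ℕ
  | .pos _ => 0
  | .neg _ => 0
  | .conj a b => deg a + deg b + 1
  | .disj a b => deg a + deg b + 1

/-- Total number of connectives in a sequent. -/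
def mdeg (Γ : Multiset Fm) : ℕ := (Γ.map deg).sum

lemma mdeg_add (Γ Δ : Multiset Fm) : mdeg (Γ + Δ) = mdeg Γ + mdeg Δ := by
  simp [mdeg]

lemma mdeg_singleton (A : Fm) : mdeg {A} = deg A := by simp [mdeg]

lemma sound {Γ : Multiset Fm} (h : Mp Γ) : Valid Γ := by
  induction h with
  | ax P =>
    refine ⟨by simp, fun v => ?_⟩
    cases hv : v P
    · exact ⟨.neg P, by simp, by simp [Fm.eval, hv]⟩
    · exact ⟨.pos P, by simp, by simp [Fm.eval, hv]⟩
  | blend h1 h2 ih1 ih2 =>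
    rename_i Γ Δ S A B
    refine ⟨by simp, fun v => ?_⟩
    obtain ⟨C, hC, hCe⟩ := ih1.2 v
    simp only [Multiset.mem_add, Multiset.mem_singleton] at hC
    rcases hC with (hC | hC) | hCA
    · exact ⟨C, by simp [hC], hCe⟩
    · exact ⟨C, by simp [hC], hCe⟩
    · obtain ⟨D, hD, hDe⟩ := ih2.2 v
      simp only [Multiset.mem_add, Multiset.mem_singleton] at hD
      rcases hD with (hD | hD) | hDB
      · exact ⟨D, by simp [hD], hDe⟩
      · exact ⟨D, by simp [hD], hDe⟩
      · exact ⟨.conj A B, by simp, by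
          simp [Fm.eval, hCA ▸ hCe, hDB ▸ hDe]⟩
  | par h ih =>
    rename_i Γ A B
    refine ⟨by simp, fun v => ?_⟩
    obtain ⟨C, hC, hCe⟩ := ih.2 v
    rw [Multiset.mem_add] at hC
    rcases hC with hC | hC
    · exact ⟨C, by simp [hC], hCe⟩
    · simp only [Multiset.insert_eq_cons, Multiset.mem_cons, Multiset.mem_singleton] at hC
      rcases hC with hCA | hCB
      · exact ⟨.disj A B, by simp, by simp [Fm.eval, hCA ▸ hCe]⟩
      · exact ⟨.disj A B, by simp, by simp [Fm.eval, hCB ▸ hCe]⟩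
  | plus1 h ih =>
    rename_i Γ A B
    refine ⟨by simp, fun v => ?_⟩
    obtain ⟨C, hC, hCe⟩ := ih.2 v
    rw [Multiset.mem_add] at hC
    rcases hC with hC | hC
    · exact ⟨C, by simp [hC], hCe⟩
    · simp only [Multiset.mem_singleton] at hC
      exact ⟨.disj A B, by simp, by simp [Fm.eval, hC ▸ hCe]⟩
  | plus2 h ih =>
    rename_i Γ A B
    refine ⟨by simp, fun v => ?_⟩
    obtain ⟨C, hC, hCe⟩ := ih.2 v
    rw [Multiset.mem_add] at hC
    rcases hC with hC | hC
    · exact ⟨C, by simp [hC], hCe⟩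
    · simp only [Multiset.mem_singleton] at hC
      exact ⟨.disj A B, by simp, by simp [Fm.eval, hC ▸ hCe]⟩

/-- Decomposition of a sub-multiset of `Γ + {A}`. -/
lemma le_add_singleton {Δ Γ : Multiset Fm} {A : Fm} (h : Δ ≤ Γ + {A}) :
    Δ ≤ Γ ∨ ∃ T : Multiset Fm, T ≤ Γ ∧ Δ = T + {A} := by
  obtain ⟨t, ht⟩ := Multiset.le_iff_exists_add.mp h
  by_cases hA : A ∈ t
  · left
    have he : t = t.erase A + {A} := by
      rw [add_comm, Multiset.singleton_add, Multiset.cons_erase hA]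
    have h1 : Γ + {A} = (Δ + t.erase A) + {A} := by
      rw [ht]
      conv_lhs => rw [he]
      rw [← add_assoc]
    exact Multiset.le_iff_exists_add.mpr ⟨t.erase A, add_right_cancel h1⟩
  · right
    have hAΔ : A ∈ Δ := by
      have hmem : A ∈ Δ + t := by rw [← ht]; simp
      rw [Multiset.mem_add] at hmem; tauto
    have hΔ : Δ = Δ.erase A + {A} := by
      rw [add_comm, Multiset.singleton_add, Multiset.cons_erase hAΔ]
    refine ⟨Δ.erase A, ?_, hΔ⟩
    have h1 : Γ + {A} = (Δ.erase A + t) + {A} := by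
      rw [ht]
      conv_lhs => rw [hΔ]
      rw [add_right_comm]
    exact Multiset.le_iff_exists_add.mpr ⟨t, add_right_cancel h1⟩

lemma pair_eq (A B : Fm) : ({A, B} : Multiset Fm) = {A} + {B} := rfl

/-- Decomposition of a sub-multiset of `Γ + {A, B}`. -/
lemma le_add_pair {Δ Γ : Multiset Fm} {A B : Fm} (h : Δ ≤ Γ + {A, B}) :
    Δ ≤ Γ + {A} ∨ Δ ≤ Γ + {B} ∨ ∃ T : Multiset Fm, T ≤ Γ ∧ Δ = T + {A, B} := by
  rw [pair_eq, ← add_assoc] at h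
  rcases le_add_singleton h with h1 | ⟨T, hT, rfl⟩
  · left; exact h1
  · rcases le_add_singleton hT with h2 | ⟨T', hT', rfl⟩
    · right; left; exact add_le_add_left h2 {B}
    · right; right
      exact ⟨T', hT', by rw [pair_eq, ← add_assoc]⟩

lemma valid_ne_zero_cons (Γ : Multiset Fm) (A : Fm) : Γ + {A} ≠ 0 := by simp

/-- If `Γ' + {A ∨ B}` is valid, so is `Γ' + {A, B}`. -/
lemma valid_disj {Γ : Multiset Fm} {A B : Fm} (h : Valid (Γ + {.disj A B})) :
    Valid (Γ + {A, B}) := by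
  refine ⟨by simp, fun v => ?_⟩
  obtain ⟨C, hC, hCe⟩ := h.2 v
  rw [Multiset.mem_add] at hC
  rcases hC with hC | hC
  · exact ⟨C, by simp [hC], hCe⟩
  · simp only [Multiset.mem_singleton] at hC; subst hC
    simp only [Fm.eval, Bool.or_eq_true] at hCe
    rcases hCe with hA | hB
    · exact ⟨A, by simp, hA⟩
    · exact ⟨B, by simp, hB⟩

/-- If `Γ' + {A ∧ B}` is valid, so are `Γ' + {A}` and `Γ' + {B}`. -/
lemma valid_conj {Γ : Multiset Fm} {A B : Fm} (h : Valid (Γ + {.conj A B})) :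
    Valid (Γ + {A}) ∧ Valid (Γ + {B}) := by
  constructor
  · refine ⟨by simp, fun v => ?_⟩
    obtain ⟨C, hC, hCe⟩ := h.2 v
    rw [Multiset.mem_add] at hC
    rcases hC with hC | hC
    · exact ⟨C, by simp [hC], hCe⟩
    · simp only [Multiset.mem_singleton] at hC; subst hC
      simp only [Fm.eval, Bool.and_eq_true] at hCe
      exact ⟨A, by simp, hCe.1⟩
  · refine ⟨by simp, fun v => ?_⟩
    obtain ⟨C, hC, hCe⟩ := h.2 v
    rw [Multiset.mem_add] at hC
    rcases hC with hC | hC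
    · exact ⟨C, by simp [hC], hCe⟩
    · simp only [Multiset.mem_singleton] at hC; subst hC
      simp only [Fm.eval, Bool.and_eq_true] at hCe
      exact ⟨B, by simp, hCe.2⟩

lemma union_decomp (S1 S2 : Multiset Fm) :
    (S1 ∩ S2) + (S1 - S1 ∩ S2) + (S2 - S1 ∩ S2) = S1 ∪ S2 := by
  ext a
  simp only [Multiset.count_add, Multiset.count_sub, Multiset.count_inter,
    Multiset.count_union]
  omega

lemma pair_le {x y : Fm} {Γ : Multiset Fm} (hxy : x ≠ y) (hx : x ∈ Γ) (hy : y ∈ Γ) :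
    ({x, y} : Multiset Fm) ≤ Γ := by
  rw [Multiset.le_iff_count]
  intro a
  have hcx : 1 ≤ Γ.count x := Multiset.one_le_count_iff_mem.mpr hx
  have hcy : 1 ≤ Γ.count y := Multiset.one_le_count_iff_mem.mpr hy
  rw [Multiset.insert_eq_cons, Multiset.count_cons, Multiset.count_singleton]
  by_cases h1 : a = x <;> by_cases h2 : a = y <;> subst_eqs <;> simp_all

/-- Completeness, by strong induction on the number of connectives. -/
lemma complete : ∀ n : ℕ, ∀ Γ : Multiset Fm, mdeg Γ ≤ n → Valid Γ →
    ∃ Δ : Multiset Fm, Δ ≤ Γ ∧ Mp Δ := by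
  intro n
  induction n using Nat.strong_induction_on with
  | _ n ih =>
  intro Γ hdeg hval
  by_cases hcomp : ∃ A B : Fm, (Fm.conj A B ∈ Γ ∨ Fm.disj A B ∈ Γ)
  · obtain ⟨A, B, hC⟩ := hcomp
    rcases hC with hC | hC
    · -- conjunction case
      set Γ' := Γ.erase (.conj A B) with hΓ'
      have hΓeq : Γ = Γ' + {.conj A B} := by
        rw [add_comm, Multiset.singleton_add, hΓ', Multiset.cons_erase hC]
      have hv := valid_conj (hΓeq ▸ hval)
      have hdegA : mdeg (Γ' + {A}) < n := by
        have h1 : mdeg Γ = mdeg Γ' + deg A + deg B + 1 := by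
          rw [hΓeq, mdeg_add, mdeg_singleton]; simp [deg]; ring
        have := hdeg
        rw [h1] at this
        rw [mdeg_add, mdeg_singleton]
        omega
      have hdegB : mdeg (Γ' + {B}) < n := by
        have h1 : mdeg Γ = mdeg Γ' + deg A + deg B + 1 := by
          rw [hΓeq, mdeg_add, mdeg_singleton]; simp [deg]; ring
        have := hdeg
        rw [h1] at this
        rw [mdeg_add, mdeg_singleton]
        omega
      obtain ⟨Δ₁, hΔ₁, hMp₁⟩ := ih (mdeg (Γ' + {A})) hdegA (Γ' + {A}) le_rfl hv.1
      obtain ⟨Δ₂, hΔ₂, hMp₂⟩ := ih (mdeg (Γ' + {B})) hdegB (Γ' + {B}) le_rfl hv.2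
      rcases le_add_singleton hΔ₁ with h1 | ⟨S1, hS1, rfl⟩
      · exact ⟨Δ₁, le_trans h1 (by rw [hΓeq]; exact le_self_add), hMp₁⟩
      rcases le_add_singleton hΔ₂ with h2 | ⟨S2, hS2, rfl⟩
      · exact ⟨Δ₂, le_trans h2 (by rw [hΓeq]; exact le_self_add), hMp₂⟩
      · -- blend
        set Γ₀ := S1 ∩ S2 with hΓ₀
        have e1 : Γ₀ + (S1 - Γ₀) = S1 := by
          rw [add_comm]; exact tsub_add_cancel_of_le (Multiset.inter_le_left)
        have e2 : Γ₀ + (S2 - Γ₀) = S2 := by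
          rw [add_comm]; exact tsub_add_cancel_of_le (Multiset.inter_le_right)
        have hb := Mp.blend (A := A) (B := B) (Γ := Γ₀) (Δ := S1 - Γ₀) (S := S2 - Γ₀)
          (by rw [e1]; exact hMp₁) (by rw [e2]; exact hMp₂)
        refine ⟨Γ₀ + (S1 - Γ₀) + (S2 - Γ₀) + {.conj A B}, ?_, hb⟩
        rw [hΓeq]
        apply add_le_add_left
        rw [union_decomp]
        exact sup_le hS1 hS2
    · -- disjunction case
      set Γ' := Γ.erase (.disj A B) with hΓ'
      have hΓeq : Γ = Γ' + {.disj A B} := by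
        rw [add_comm, Multiset.singleton_add, hΓ', Multiset.cons_erase hC]
      have hv := valid_disj (hΓeq ▸ hval)
      have hdegAB : mdeg (Γ' + {A, B}) < n := by
        have h1 : mdeg Γ = mdeg Γ' + deg A + deg B + 1 := by
          rw [hΓeq, mdeg_add, mdeg_singleton]; simp [deg]; ring
        have := hdeg
        rw [h1] at this
        rw [pair_eq, ← add_assoc, mdeg_add, mdeg_add, mdeg_singleton, mdeg_singleton]
        omega
      obtain ⟨Δ, hΔ, hMp⟩ := ih (mdeg (Γ' + {A, B})) hdegAB (Γ' + {A, B}) le_rfl hv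
      rcases le_add_pair hΔ with h1 | h1 | ⟨T, hT, rfl⟩
      · rcases le_add_singleton h1 with h2 | ⟨T, hT, rfl⟩
        · exact ⟨Δ, le_trans h2 (by rw [hΓeq]; exact le_self_add), hMp⟩
        · exact ⟨T + {.disj A B}, by rw [hΓeq]; exact add_le_add_left hT _,
            Mp.plus1 hMp⟩
      · rcases le_add_singleton h1 with h2 | ⟨T, hT, rfl⟩
        · exact ⟨Δ, le_trans h2 (by rw [hΓeq]; exact le_self_add), hMp⟩
        · exact ⟨T + {.disj A B}, by rw [hΓeq]; exact add_le_add_left hT _,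
            Mp.plus2 hMp⟩
      · exact ⟨T + {.disj A B}, by rw [hΓeq]; exact add_le_add_left hT _,
          Mp.par hMp⟩
  · -- all literals
    push_neg at hcomp
    obtain ⟨C, hC, hCe⟩ := hval.2 (fun p => decide (Fm.neg p ∈ Γ))
    cases C with
    | pos p =>
      have hn : Fm.neg p ∈ Γ := by
        simpa [Fm.eval] using hCe
      exact ⟨{Fm.pos p, Fm.neg p}, pair_le (by simp) hC hn, Mp.ax p⟩
    | neg p =>
      exfalso
      simp only [Fm.eval, Bool.not_eq_true', decide_eq_false_iff_not] at hCe
      exact hCe hC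
    | conj a b => exact absurd hC ((hcomp a b).1)
    | disj a b => exact absurd hC ((hcomp a b).2)

end Stmt9Aux

theorem stmt_9 (Γ : Multiset Fm) (hne : Γ ≠ 0) :
    Valid Γ ↔ ∃ Δ : Multiset Fm, Δ ≤ Γ ∧ Mp Δ := by
  constructor
  · intro h
    exact Stmt9Aux.complete (Stmt9Aux.mdeg Γ) Γ le_rfl h
  · rintro ⟨Δ, hΔ, hMp⟩
    have hv := Stmt9Aux.sound hMp
    refine ⟨hne, fun v => ?_⟩
    obtain ⟨A, hA, hAe⟩ := hv.2 v
    exact ⟨A, Multiset.mem_of_le hΔ hA, hAe⟩
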